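/- Every full triangle functor F : 𝒜 → ℬ between triangulated categories is objective: every morphism f : X → Y in 𝒜 with F(f) = 0 factors through an object K of 𝒜 with F(K) ≅ 0. -/

import Mathlib

universe v u v' u' v'' u''

open CategoryTheory Limits Pretriangulated

section CatPreamble

variable {𝒜 : Type u} [Category.{v} 𝒜] {ℬ : Type u'} [Category.{v'} ℬ]

/-- An additive functor is objective if every morphism killed by `F` factors through an
object killed by `F`. -/
def ObjectiveFunctor [Limits.HasZeroMorphisms ℬ] (F : 𝒜 ⥤ ℬ) : Prop :=
  ∀ ⦃X Y : 𝒜⦄ (f : X ⟶ Y), F.map f = 0 →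
    ∃ (K : 𝒜) (g : X ⟶ K) (h : K ⟶ Y), Limits.IsZero (F.obj K) ∧ g ≫ h = f

/-- Condition (WSM). -/
def CondWSM (F : 𝒜 ⥤ ℬ) : Prop :=
  ∀ ⦃X Y : 𝒜⦄ (u : X ⟶ Y), IsSplitMono (F.map u) →
    ∃ (X' : 𝒜) (u' : Y ⟶ X'), IsIso (F.map (u ≫ u'))

/-- Condition (I). -/
def CondI (F : 𝒜 ⥤ ℬ) : Prop :=
  ∀ ⦃X Y : 𝒜⦄ (u : X ⟶ Y) (_ : IsIso (F.map u)),
    ∃ u' : Y ⟶ X, F.map u' = CategoryTheory.inv (F.map u)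

/-- Condition (SM). -/
def CondSM (F : 𝒜 ⥤ ℬ) : Prop :=
  ∀ ⦃X Y : 𝒜⦄ (u : X ⟶ Y), IsSplitMono (F.map u) →
    ∃ u' : Y ⟶ X, F.map (u ≫ u') = 𝟙 (F.obj X)

variable (𝒜) in
/-- Iterated composition of an endomorphism. -/
def compPow {X : 𝒜} (f : X ⟶ X) : ℕ → (X ⟶ X)
  | 0 => 𝟙 X
  | n + 1 => f ≫ compPow f n

variable (𝒜) in
/-- A Fitting category: every endomorphism decomposes as an automorphism plus a
nilpotent endomorphism along a direct sum decomposition of the object. -/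
def IsFittingCategory [Preadditive 𝒜] : Prop :=
  ∀ (X : 𝒜) (a : X ⟶ X),
    ∃ (X' X'' : 𝒜) (i' : X' ⟶ X) (p' : X ⟶ X') (i'' : X'' ⟶ X) (p'' : X ⟶ X''),
      i' ≫ p' = 𝟙 X' ∧ i'' ≫ p'' = 𝟙 X'' ∧ i' ≫ p'' = 0 ∧ i'' ≫ p' = 0 ∧
      p' ≫ i' + p'' ≫ i'' = 𝟙 X ∧
      i' ≫ a ≫ p'' = 0 ∧ i'' ≫ a ≫ p' = 0 ∧
      IsIso (i' ≫ a ≫ p') ∧ ∃ n : ℕ, compPow 𝒜 (i'' ≫ a ≫ p'') (n + 1) = 0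

section Triangulated

variable [HasZeroObject 𝒜] [Preadditive 𝒜] [HasShift 𝒜 ℤ]
  [∀ n : ℤ, (shiftFunctor 𝒜 n).Additive] [Pretriangulated 𝒜]
  [HasZeroObject ℬ] [Preadditive ℬ] [HasShift ℬ ℤ]
  [∀ n : ℤ, (shiftFunctor ℬ n).Additive] [Pretriangulated ℬ]

/-- The class of morphisms of `𝒜` whose cone is killed by `F`; the Verdier quotient of
`𝒜` by `Ker F` is the localization of `𝒜` at this class. -/
def kerW (F : 𝒜 ⥤ ℬ) : MorphismProperty 𝒜 := fun X Y f =>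
  ∃ (Z : 𝒜) (g : Y ⟶ Z) (h : Z ⟶ X⟦(1 : ℤ)⟧),
    (Triangle.mk f g h ∈ distTriang 𝒜) ∧ IsZero (F.obj Z)

end Triangulated

end CatPreamble

/-- [RZ2, 4.4]. Every full triangle functor is objective. -/
theorem stmt14
    {𝒜 : Type u} [Category.{v} 𝒜] [HasZeroObject 𝒜] [Preadditive 𝒜] [HasShift 𝒜 ℤ]
    [∀ n : ℤ, (CategoryTheory.shiftFunctor 𝒜 n).Additive] [Pretriangulated 𝒜]
    {ℬ : Type u'} [Category.{v'} ℬ] [HasZeroObject ℬ] [Preadditive ℬ] [HasShift ℬ ℤ]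
    [∀ n : ℤ, (CategoryTheory.shiftFunctor ℬ n).Additive] [Pretriangulated ℬ]
    (F : 𝒜 ⥤ ℬ) [F.Additive] [F.CommShift ℤ] [F.IsTriangulated] [F.Full] :
    ObjectiveFunctor F := by
  intro X Y f hf
  obtain ⟨Z, g, h, hT⟩ := Pretriangulated.distinguished_cocone_triangle f
  have hFT := F.map_distinguished _ hT
  obtain ⟨r, hr⟩ : ∃ r : F.obj Z ⟶ F.obj Y, 𝟙 (F.obj Y) = F.map g ≫ r :=
    Pretriangulated.Triangle.yoneda_exact₂ _ hFT (𝟙 (F.obj Y))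
    (by change F.map f ≫ 𝟙 (F.obj Y) = 0; rw [Category.comp_id]; exact hf)
  set e : Y ⟶ Y := g ≫ F.preimage r with he
  have hFe : F.map e = 𝟙 (F.obj Y) := by
    rw [he, F.map_comp, F.map_preimage]
    exact hr.symm
  obtain ⟨K, p, q, hT₂⟩ := Pretriangulated.distinguished_cocone_triangle e
  have hFT₂ := F.map_distinguished _ hT₂
  have hKzero : IsZero (F.obj K) := by
    refine Pretriangulated.Triangle.isZero₃_of_isIso₁ _ hFT₂ ?_
    dsimp [Functor.mapTriangle]
    change IsIso (F.map e)
    rw [hFe]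
    infer_instance
  have hfg : f ≫ g = 0 := Pretriangulated.comp_distTriang_mor_zero₁₂ _ hT
  have hfe : f ≫ e = 0 := by
    rw [he, ← Category.assoc, hfg, Limits.zero_comp]
  obtain ⟨t, ht⟩ := Pretriangulated.Triangle.coyoneda_exact₂ _
    (Pretriangulated.inv_rot_of_distTriang _ hT₂) f hfe
  refine ⟨K⟦(-1 : ℤ)⟧, t, _, ?_, ht.symm⟩
  exact ((shiftFunctor ℬ (-1 : ℤ)).map_isZero hKzero).of_iso
    ((F.commShiftIso (-1 : ℤ)).app K)
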